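/- Let r ≥ 1 and s ≥ 3, and suppose x = (λ^1,…,λ^{s-1},ν) spans an extremal ray of EqLR_r^s and satisfies the equalities Σ_{q=1}^{s-1} λ^q_1 = ν_1 and, for every p ∈ {1,…,s-1} and every k with 2 ≤ k ≤ r, λ^p_k + Σ_{q≠p} λ^q_1 = ν_k. Then x = t·x_j for some j ∈ {1,…,s-1} and some real t > 0. Conversely, each x_j spans an extremal ray of EqLR_r^s and satisfies these equalities. -/

import Mathlib

open Matrix Polynomial BigOperators
open scoped ComplexOrder

noncomputable section

/-- A Hermitian `r × r` complex matrix `A` has eigenvalues `μ` (listed with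
multiplicity): `A` is Hermitian and its characteristic polynomial is
`∏ i, (X - μ i)`. -/
def HasEigenvalues {r : ℕ} (A : Matrix (Fin r) (Fin r) ℂ) (μ : Fin r → ℝ) : Prop :=
  A.IsHermitian ∧ A.charpoly = ∏ i, (X - Polynomial.C (μ i : ℂ))

/-- A tuple `(λ¹, …, λ^{s-1}, ν)` of real `r`-sequences. -/
abbrev Tup (r s : ℕ) := (Fin (s - 1) → Fin r → ℝ) × (Fin r → ℝ)

/-- The Hermitian eigencone `C_r^s`: tuples of nonincreasing sequences that are the
eigenvalues of Hermitian matrices `A₁, …, A_{s-1}, C` with `A₁ + ⋯ + A_{s-1} = C`. -/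
def memC (r s : ℕ) (x : Tup r s) : Prop :=
  (∀ j, Antitone (x.1 j)) ∧ Antitone x.2 ∧
  ∃ (A : Fin (s - 1) → Matrix (Fin r) (Fin r) ℂ) (B : Matrix (Fin r) (Fin r) ℂ),
    (∀ j, HasEigenvalues (A j) (x.1 j)) ∧ HasEigenvalues B x.2 ∧ (∑ j, A j) = B

/-- The majorized eigencone `EqC_r^s`: as above but `A₁ + ⋯ + A_{s-1} - C` is
positive semidefinite. -/
def memEqC (r s : ℕ) (x : Tup r s) : Prop :=
  (∀ j, Antitone (x.1 j)) ∧ Antitone x.2 ∧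
  ∃ (A : Fin (s - 1) → Matrix (Fin r) (Fin r) ℂ) (B : Matrix (Fin r) (Fin r) ℂ),
    (∀ j, HasEigenvalues (A j) (x.1 j)) ∧ HasEigenvalues B x.2 ∧ ((∑ j, A j) - B).PosSemidef

/-- The last (`r`-th) entry of an `r`-sequence. -/
def lastEntry {r : ℕ} (μ : Fin r → ℝ) : ℝ :=
  if h : 0 < r then μ ⟨r - 1, by omega⟩ else 0

/-- `LR_r^s = {x ∈ C_r^s : λ^j_r ≥ 0 for all j}`. -/
def memLR (r s : ℕ) (x : Tup r s) : Prop :=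
  memC r s x ∧ ∀ j, 0 ≤ lastEntry (x.1 j)

/-- `C_{SL_r}^s = {x ∈ C_r^s : λ^j_r = 0 for all j}`. -/
def memCSL (r s : ℕ) (x : Tup r s) : Prop :=
  memC r s x ∧ ∀ j, lastEntry (x.1 j) = 0

/-- `EqLR_r^s = {x ∈ EqC_r^s : λ^j_r ≥ 0 and λ^j_i ≤ ν_i for all i, j}`. -/
def memEqLR (r s : ℕ) (x : Tup r s) : Prop :=
  memEqC r s x ∧ (∀ j, 0 ≤ lastEntry (x.1 j)) ∧ ∀ j i, x.1 j i ≤ x.2 i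

/-- `ω_k ∈ ℝ^r`: first `k` entries equal `1`, the rest `0`. -/
def omegaVec (r k : ℕ) : Fin r → ℝ := fun i => if (i : ℕ) < k then 1 else 0

/-- `x_j ∈ (ℝ^r)^s`: `ω_r` in the `j`-th and last positions, `0` elsewhere. -/
def xvec (r s : ℕ) (j : Fin (s - 1)) : Tup r s :=
  (fun k => if k = j then omegaVec r r else 0, omegaVec r r)

/-- A nonzero `x` in a cone `K` spans an extremal ray of `K` if whenever
`x = y + z` with `y, z ∈ K`, both `y` and `z` are nonnegative multiples of `x`. -/
def IsExtremalRay {M : Type*} [AddCommMonoid M] [Module ℝ M] (K : Set M) (x : M) : Prop :=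
  x ≠ 0 ∧ x ∈ K ∧ ∀ y z, y ∈ K → z ∈ K → x = y + z →
    (∃ c : ℝ, 0 ≤ c ∧ y = c • x) ∧ (∃ c : ℝ, 0 ≤ c ∧ z = c • x)


lemma charmatrix_diagonal' {n : Type*} [DecidableEq n] [Fintype n] {R : Type*} [CommRing R]
    (d : n → R) :
    charmatrix (Matrix.diagonal d) = Matrix.diagonal (fun i => (X : R[X]) - C (d i)) := by
  ext i j
  by_cases h : i = j
  · subst h; simp [charmatrix_apply_eq]
  · rw [charmatrix_apply_ne _ _ _ h, Matrix.diagonal_apply_ne _ h, Matrix.diagonal_apply_ne _ h]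
    simp

lemma hasEig_diag {r : ℕ} (d : Fin r → ℝ) :
    HasEigenvalues (Matrix.diagonal (fun i => (d i : ℂ))) d := by
  constructor
  · exact Matrix.isHermitian_diagonal_of_self_adjoint _ (funext fun i => by simp)
  · rw [Matrix.charpoly, charmatrix_diagonal', Matrix.det_diagonal]

lemma trace_of_hasEig {r : ℕ} (hr : 0 < r) {A : Matrix (Fin r) (Fin r) ℂ} {μ : Fin r → ℝ}
    (h : HasEigenvalues A μ) : A.trace = ∑ i, (μ i : ℂ) := by
  have : Nonempty (Fin r) := ⟨⟨0, hr⟩⟩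
  have ht := Matrix.trace_eq_neg_charpoly_coeff A
  rw [h.2] at ht
  rw [ht]
  have h2 := Polynomial.prod_X_sub_C_coeff_card_pred Finset.univ (fun i : Fin r => (μ i : ℂ))
    (by simpa using hr)
  rw [Finset.card_univ] at h2
  rw [h2, neg_neg]

lemma trace_nonneg_of_psd {n : ℕ} {M : Matrix (Fin n) (Fin n) ℂ} (h : M.PosSemidef) :
    (0:ℂ) ≤ M.trace := by
  have hd : ∀ i, (0:ℂ) ≤ M i i := fun i => h.diag_nonneg
  rw [Matrix.trace]
  exact Finset.sum_nonneg fun i _ => hd i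

lemma sum_le_of_memEqC {r s : ℕ} (hr : 0 < r) {x : Tup r s} (hx : memEqC r s x) :
    ∑ i, x.2 i ≤ ∑ p, ∑ i, x.1 p i := by
  obtain ⟨-, -, A, B, hA, hB, hpsd⟩ := hx
  have h1 : ((∑ j, A j) - B).trace
      = ((∑ p, ∑ i, x.1 p i : ℝ) : ℂ) - ((∑ i, x.2 i : ℝ) : ℂ) := by
    rw [Matrix.trace_sub, Matrix.trace_sum, trace_of_hasEig hr hB]
    push_cast
    congr 1
    exact Finset.sum_congr rfl fun p _ => trace_of_hasEig hr (hA p)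
  have h2 := trace_nonneg_of_psd hpsd
  rw [h1, ← Complex.ofReal_sub, Complex.zero_le_real] at h2
  linarith

lemma memEqLR_const (r s : ℕ) (c : Fin (s-1) → ℝ) (hc : ∀ p, 0 ≤ c p) :
    memEqLR r s ((fun p _ => c p), (fun _ => ∑ p, c p)) := by
  refine ⟨⟨fun _ => antitone_const, antitone_const,
    fun p => Matrix.diagonal (fun _ : Fin r => (c p : ℂ)),
    Matrix.diagonal (fun _ : Fin r => ((∑ p, c p : ℝ) : ℂ)),
    fun p => hasEig_diag _, hasEig_diag _, ?_⟩, ?_, ?_⟩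
  · have hdiag : (∑ p : Fin (s-1), Matrix.diagonal (fun _ : Fin r => (c p : ℂ)))
        = Matrix.diagonal (fun _ : Fin r => ((∑ p, c p : ℝ) : ℂ)) := by
      ext i k
      by_cases h : i = k
      · subst h
        simp [Matrix.sum_apply]
      · simp [Matrix.sum_apply, Matrix.diagonal_apply_ne _ h]
    rw [hdiag, sub_self]
    exact Matrix.PosSemidef.zero
  · intro p
    unfold lastEntry
    split
    · exact hc p
    · exact le_rfl
  · intro p i
    exact Finset.single_le_sum (fun q _ => hc q) (Finset.mem_univ p)

lemma entries_nonneg {r s : ℕ} {y : Tup r s} (hy : memEqLR r s y) (p : Fin (s-1)) (i : Fin r) :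
    0 ≤ y.1 p i := by
  have h0 : 0 < r := i.pos
  have hl := hy.2.1 p
  rw [lastEntry, dif_pos h0] at hl
  refine le_trans hl (hy.1.1 p ?_)
  rw [Fin.le_def]
  have := i.isLt
  simp only []
  omega

lemma xvec_eq_const (r s : ℕ) (j : Fin (s-1)) :
    xvec r s j = ((fun p (_ : Fin r) => if p = j then (1:ℝ) else 0),
      (fun _ => ∑ p : Fin (s-1), if p = j then (1:ℝ) else 0)) := by
  refine Prod.ext ?_ ?_
  · funext p i
    show (if p = j then omegaVec r r else 0) i = _
    by_cases h : p = j <;> simp [h, omegaVec, i.isLt]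
  · funext i
    show omegaVec r r i = _
    simp [omegaVec, i.isLt]

lemma xvec_half {r s : ℕ} (hr : 1 ≤ r) (j : Fin (s-1)) (y z : Tup r s)
    (hy : memEqLR r s y) (hz : memEqLR r s z) (h : xvec r s j = y + z) :
    ∃ c : ℝ, 0 ≤ c ∧ y = c • xvec r s j := by
  rw [xvec_eq_const r s j] at h
  have h1 : ∀ p (i : Fin r), (if p = j then (1:ℝ) else 0) = y.1 p i + z.1 p i := by
    intro p i
    have h' := congrFun (congrFun (congrArg Prod.fst h) p) i
    simpa using h'
  have h2 : ∀ i : Fin r, (1:ℝ) = y.2 i + z.2 i := by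
    intro i
    have h' := congrFun (congrArg Prod.snd h) i
    simpa using h'
  have hyz0 : ∀ p, p ≠ j → ∀ i, y.1 p i = 0 := by
    intro p hp i
    have h' := h1 p i
    rw [if_neg hp] at h'
    have := entries_nonneg hy p i
    have := entries_nonneg hz p i
    linarith
  have ht := sum_le_of_memEqC (by omega) hy.1
  have hsum : ∑ p, ∑ i, y.1 p i = ∑ i, y.1 j i := by
    refine Finset.sum_eq_single_of_mem j (Finset.mem_univ j) ?_
    intro p _ hp
    exact Finset.sum_eq_zero fun i _ => hyz0 p hp i
  have hle : ∀ i, y.1 j i ≤ y.2 i := fun i => hy.2.2 j i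
  have heq : ∀ i, y.1 j i = y.2 i := by
    have hzero : ∑ i, (y.2 i - y.1 j i) = 0 := by
      have hub : ∑ i, (y.2 i - y.1 j i) ≤ 0 := by
        rw [Finset.sum_sub_distrib]
        rw [hsum] at ht
        linarith
      have hlb : 0 ≤ ∑ i, (y.2 i - y.1 j i) :=
        Finset.sum_nonneg fun i _ => sub_nonneg.2 (hle i)
      linarith
    intro i
    have := (Finset.sum_eq_zero_iff_of_nonneg
      (fun i _ => sub_nonneg.2 (hle i))).1 hzero i (Finset.mem_univ i)
    linarith
  have hmono : Monotone y.2 := by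
    intro a b hab
    have hza := h2 a
    have hzb := h2 b
    have := hz.1.2.1 hab
    linarith
  have hconst : ∀ i, y.2 i = y.2 ⟨0, hr⟩ := by
    intro i
    have h0i : (⟨0, hr⟩ : Fin r) ≤ i := by simp [Fin.le_def]
    exact le_antisymm (hy.1.2.1 h0i) (hmono h0i)
  refine ⟨y.2 ⟨0, hr⟩, (heq _ ▸ entries_nonneg hy j ⟨0, hr⟩), ?_⟩
  refine Prod.ext ?_ ?_
  · funext p i
    show y.1 p i = (y.2 ⟨0, hr⟩ • xvec r s j).1 p i
    by_cases hp : p = j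
    · subst hp
      rw [heq i, hconst i]
      simp [xvec, omegaVec, i.isLt]
    · rw [hyz0 p hp i]
      simp [xvec, hp]
  · funext i
    show y.2 i = (y.2 ⟨0, hr⟩ • xvec r s j).2 i
    rw [hconst i]
    simp [xvec, omegaVec, i.isLt]

lemma xvec_isExtremal (r s : ℕ) (hr : 1 ≤ r) :
    ∀ j : Fin (s-1), IsExtremalRay {y : Tup r s | memEqLR r s y} (xvec r s j) := by
  intro j
  refine ⟨?_, ?_, ?_⟩
  · intro h0
    have h' := congrFun (congrArg Prod.snd h0) ⟨0, hr⟩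
    simp [xvec, omegaVec, hr] at h'
    omega
  · show memEqLR r s (xvec r s j)
    rw [xvec_eq_const]
    exact memEqLR_const r s _ (fun p => by split <;> norm_num)
  · intro y z hy hz hxy
    exact ⟨xvec_half hr j y z hy hz hxy, xvec_half hr j z y hz hy (by rwa [add_comm])⟩

/-- an extremal ray of `EqLR_r^s` satisfying the displayed Horn
equalities is a positive multiple of some `x_j`; conversely each `x_j` spans an
extremal ray and satisfies those equalities. -/
theorem stmt10 (r s : ℕ) (hr : 1 ≤ r) (hs : 3 ≤ s) :
    (∀ x : Tup r s,
      IsExtremalRay {y : Tup r s | memEqLR r s y} x →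
      (∑ q, x.1 q ⟨0, by omega⟩ = x.2 ⟨0, by omega⟩) →
      (∀ p : Fin (s - 1), ∀ k : ℕ, ∀ _hk2 : 2 ≤ k, ∀ _hkr : k ≤ r,
        x.1 p ⟨k - 1, by omega⟩ + ∑ q ∈ Finset.univ.erase p, x.1 q ⟨0, by omega⟩
          = x.2 ⟨k - 1, by omega⟩) →
      ∃ (j : Fin (s - 1)) (t : ℝ), 0 < t ∧ x = t • xvec r s j) ∧
    (∀ j : Fin (s - 1),
      IsExtremalRay {y : Tup r s | memEqLR r s y} (xvec r s j) ∧
      (∑ q, (xvec r s j).1 q ⟨0, by omega⟩ = (xvec r s j).2 ⟨0, by omega⟩) ∧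
      (∀ p : Fin (s - 1), ∀ k : ℕ, ∀ _hk2 : 2 ≤ k, ∀ _hkr : k ≤ r,
        (xvec r s j).1 p ⟨k - 1, by omega⟩
          + ∑ q ∈ Finset.univ.erase p, (xvec r s j).1 q ⟨0, by omega⟩
          = (xvec r s j).2 ⟨k - 1, by omega⟩)) := by
  constructor
  · -- forward direction
    intro x hx hE1 hE2
    obtain ⟨hx0, hxK, hxsplit⟩ := hx
    have hxK' : memEqLR r s x := hxK
    have h0r : 0 < r := by omega
    set i0 : Fin r := ⟨0, h0r⟩ with hi0def
    have hE1' : ∑ q, x.1 q i0 = x.2 i0 := hE1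
    -- Step B: every column is determined
    have hkey : ∀ p (i : Fin r), x.1 p i = x.2 i - x.2 i0 + x.1 p i0 := by
      intro p i
      rcases Nat.eq_zero_or_pos i.val with h0 | h1
      · have hii : i = i0 := Fin.ext h0
        rw [hii]; ring
      · have h2 : x.1 p i + ∑ q ∈ Finset.univ.erase p, x.1 q i0 = x.2 i :=
          hE2 p ((i : ℕ) + 1) (by omega) (by omega)
        have h3 := Finset.add_sum_erase Finset.univ (fun q => x.1 q i0) (Finset.mem_univ p)
        linarith
    -- trace inequality
    have htr := sum_le_of_memEqC h0r hxK'.1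
    have hrowsum : ∀ p, ∑ i, x.1 p i = ∑ i, x.2 i - r * x.2 i0 + r * x.1 p i0 := by
      intro p
      rw [Finset.sum_congr rfl fun i _ => hkey p i]
      rw [Finset.sum_add_distrib, Finset.sum_sub_distrib, Finset.sum_const, Finset.sum_const,
        Finset.card_univ, Fintype.card_fin, nsmul_eq_mul, nsmul_eq_mul]
    have hsum1 : ∑ p, ∑ i, x.1 p i
        = ((s-1 : ℕ) : ℝ) * (∑ i, x.2 i - r * x.2 i0) + r * x.2 i0 := by
      rw [Finset.sum_congr rfl fun p _ => hrowsum p]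
      rw [Finset.sum_add_distrib, Finset.sum_const, Finset.card_univ, Fintype.card_fin,
        nsmul_eq_mul, ← Finset.mul_sum, hE1']
      try ring
    have hνle : ∀ i, x.2 i ≤ x.2 i0 := by
      intro i
      refine hxK'.1.2.1 ?_
      exact Fin.le_def.2 (Nat.zero_le _)
    have hSle : ∑ i, x.2 i ≤ r * x.2 i0 := by
      calc ∑ i, x.2 i ≤ ∑ _i : Fin r, x.2 i0 := Finset.sum_le_sum fun i _ => hνle i
      _ = r * x.2 i0 := by rw [Finset.sum_const, Finset.card_univ, Fintype.card_fin, nsmul_eq_mul]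
    have hm2 : (2:ℝ) ≤ ((s-1 : ℕ) : ℝ) := by
      have : 2 ≤ s - 1 := by omega
      exact_mod_cast this
    have hSge : r * x.2 i0 ≤ ∑ i, x.2 i := by
      rw [hsum1] at htr
      nlinarith [htr, hSle, hm2]
    have hν0 : ∀ i, x.2 i = x.2 i0 := by
      have hzero : ∑ i, (x.2 i0 - x.2 i) = 0 := by
        rw [Finset.sum_sub_distrib, Finset.sum_const, Finset.card_univ, Fintype.card_fin,
          nsmul_eq_mul]
        linarith
      intro i
      have := (Finset.sum_eq_zero_iff_of_nonneg
        (fun i _ => sub_nonneg.2 (hνle i))).1 hzero i (Finset.mem_univ i)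
      linarith
    have hLconst : ∀ p (i : Fin r), x.1 p i = x.1 p i0 := by
      intro p i
      rw [hkey p i, hν0 i]
      ring
    have hc0 : ∀ p, 0 ≤ x.1 p i0 := by
      intro p
      have hl := hxK'.2.1 p
      rw [lastEntry, dif_pos h0r] at hl
      exact hl.trans_eq (hLconst p _)
    by_cases hall : ∀ p, x.1 p i0 = 0
    · exfalso
      apply hx0
      have hν00 : x.2 i0 = 0 := by rw [← hE1']; exact Finset.sum_eq_zero fun p _ => hall p
      refine Prod.ext ?_ ?_
      · funext p i
        show x.1 p i = 0
        rw [hLconst p i, hall p]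
      · funext i
        show x.2 i = 0
        rw [hν0 i, hν00]
    · push_neg at hall
      obtain ⟨p0, hp0⟩ := hall
      have hp0pos : 0 < x.1 p0 i0 := lt_of_le_of_ne (hc0 p0) (Ne.symm hp0)
      set c1 : Fin (s-1) → ℝ := fun p => if p = p0 then x.1 p0 i0 else 0 with hc1def
      set c2 : Fin (s-1) → ℝ := fun p => if p = p0 then 0 else x.1 p i0 with hc2def
      have hc1 : ∀ p, 0 ≤ c1 p := by
        intro p; rw [hc1def]; dsimp only; split
        · exact hp0pos.le
        · exact le_rfl
      have hc2 : ∀ p, 0 ≤ c2 p := by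
        intro p; rw [hc2def]; dsimp only; split
        · exact le_rfl
        · exact hc0 p
      have hy := memEqLR_const r s c1 hc1
      have hz := memEqLR_const r s c2 hc2
      have hdecomp : x = ((fun p (_ : Fin r) => c1 p), (fun _ => ∑ p, c1 p))
          + ((fun p (_ : Fin r) => c2 p), (fun _ => ∑ p, c2 p)) := by
        refine Prod.ext ?_ ?_
        · funext p i
          show x.1 p i = c1 p + c2 p
          rw [hLconst p i, hc1def, hc2def]
          by_cases h : p = p0 <;> simp [h]
        · funext i
          show x.2 i = ∑ p, c1 p + ∑ p, c2 p
          rw [hν0 i, ← hE1', ← Finset.sum_add_distrib]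
          refine Finset.sum_congr rfl fun p _ => ?_
          rw [hc1def, hc2def]
          by_cases h : p = p0 <;> simp [h]
      obtain ⟨⟨a, _, hay⟩, -⟩ := hxsplit _ _ hy hz hdecomp
      have hval : x.1 p0 i0 = a * x.1 p0 i0 := by
        have h' := congrFun (congrFun (congrArg Prod.fst hay) p0) i0
        simpa [hc1def] using h'
      have ha1 : a = 1 := by
        have h1c : 1 * x.1 p0 i0 = a * x.1 p0 i0 := by linarith
        exact (mul_right_cancel₀ hp0 h1c).symm
      have hcz : ∀ p, p ≠ p0 → x.1 p i0 = 0 := by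
        intro p hp
        have h' := congrFun (congrFun (congrArg Prod.fst hay) p) i0
        have h'' : (if p = p0 then x.1 p0 i0 else 0) = a * x.1 p i0 := by
          simpa [hc1def] using h'
        rw [if_neg hp, ha1, one_mul] at h''
        exact h''.symm
      refine ⟨p0, x.1 p0 i0, hp0pos, ?_⟩
      refine Prod.ext ?_ ?_
      · funext p i
        show x.1 p i = (x.1 p0 i0 • xvec r s p0).1 p i
        rw [hLconst p i]
        by_cases h : p = p0
        · subst h
          simp [xvec, omegaVec, i.isLt]
        · rw [hcz p h]
          simp [xvec, h]
      · funext i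
        show x.2 i = (x.1 p0 i0 • xvec r s p0).2 i
        rw [hν0 i, ← hE1']
        have hsum0 : ∑ q, x.1 q i0 = x.1 p0 i0 := by
          refine Finset.sum_eq_single_of_mem p0 (Finset.mem_univ p0) fun p _ hp => hcz p hp
        rw [hsum0]
        simp [xvec, omegaVec, i.isLt]
  · -- converse direction
    intro j
    refine ⟨xvec_isExtremal r s hr j, ?_, ?_⟩
    · rw [xvec_eq_const]
    · intro p k hk2 hkr
      rw [xvec_eq_const]
      show (if p = j then (1:ℝ) else 0) + (∑ q ∈ Finset.univ.erase p, if q = j then (1:ℝ) else 0)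
        = ∑ p' : Fin (s-1), if p' = j then (1:ℝ) else 0
      by_cases h : p = j
      · rw [h, Finset.sum_ite_eq' _ j, Finset.sum_ite_eq' _ j]
        simp
      · have h' : j ≠ p := Ne.symm h
        rw [Finset.sum_ite_eq' _ j, Finset.sum_ite_eq' _ j]
        simp [h, h']
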